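/- Let Y ≥ 1 be a real number and let 𝒬 be a finite set of pairwise coprime positive integers such that all elements of 𝒬, with at most one exception, are of the form p^b for some prime p > Y and integer b ≥ 1. Let q ≥ 2 be an integer such that q ∣ ∏_{m∈S} m for some S ⊆ 𝒬, and set d = min{|S| : S ⊆ 𝒬 and q ∣ ∏_{m∈S} m}. Then q ≥ Y^{d−1}. -/
import Mathlib

lemma aux_prod_dvd (q : ℕ) (S : Finset ℕ) (f : ℕ → ℕ)
    (hcop : ∀ a ∈ S, ∀ b ∈ S, a ≠ b → Nat.Coprime (f a) (f b))
    (hdvd : ∀ a ∈ S, f a ∣ q) : ∏ m ∈ S, f m ∣ q := by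
  induction S using Finset.induction_on with
  | empty => simpa using Nat.one_dvd q
  | @insert a s hnot ih =>
    rw [Finset.prod_insert hnot]
    apply Nat.Coprime.mul_dvd_of_dvd_of_dvd
    · apply Nat.Coprime.prod_right
      intro b hb
      exact hcop a (Finset.mem_insert_self a s) b (Finset.mem_insert_of_mem hb)
        (by rintro rfl; exact hnot hb)
    · exact hdvd a (Finset.mem_insert_self a s)
    · exact ih (fun x hx y hy hxy => hcop x (Finset.mem_insert_of_mem hx) y
        (Finset.mem_insert_of_mem hy) hxy) (fun x hx => hdvd x (Finset.mem_insert_of_mem hx))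

/-- Let `Y ≥ 1` and let `𝒬` be a finite set of pairwise coprime
positive integers, all of which, with at most one exception, are powers `p^b` of
primes `p > Y` (with `b ≥ 1`). If `q ≥ 2` divides `∏_{m ∈ S} m` for some `S ⊆ 𝒬`,
and `d` is the minimal cardinality of such an `S`, then `q ≥ Y^{d-1}`. -/
theorem stmt18 (Y : ℝ) (hY : 1 ≤ Y)
    (Q : Finset ℕ) (hpos : ∀ q ∈ Q, 0 < q)
    (hcop : ∀ q ∈ Q, ∀ q' ∈ Q, q ≠ q' → Nat.Coprime q q')
    (hexc : ∃ q₀ : ℕ, ∀ m ∈ Q, m ≠ q₀ →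
      ∃ (p b : ℕ), p.Prime ∧ Y < (p : ℝ) ∧ 1 ≤ b ∧ m = p ^ b)
    (q : ℕ) (hq : 2 ≤ q) (hdvd : ∃ S ⊆ Q, q ∣ ∏ m ∈ S, m)
    (d : ℕ) (hd : d = sInf {n : ℕ | ∃ S ⊆ Q, S.card = n ∧ q ∣ ∏ m ∈ S, m}) :
    Y ^ (d - 1) ≤ (q : ℝ) := by
  obtain ⟨q₀, hq₀⟩ := hexc
  -- the set is nonempty
  have hne : {n : ℕ | ∃ S ⊆ Q, S.card = n ∧ q ∣ ∏ m ∈ S, m}.Nonempty := by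
    obtain ⟨S, hSQ, hSdvd⟩ := hdvd
    exact ⟨S.card, S, hSQ, rfl, hSdvd⟩
  have hmem := Nat.sInf_mem hne
  rw [← hd] at hmem
  obtain ⟨S, hSQ, hScard, hSdvd⟩ := hmem
  -- minimality
  have hmin : ∀ S' ⊆ Q, q ∣ ∏ m ∈ S', m → d ≤ S'.card := by
    intro S' hS'Q hS'dvd
    rw [hd]
    exact Nat.sInf_le ⟨S', hS'Q, rfl, hS'dvd⟩
  -- each gcd is > 1
  have hgcd : ∀ m ∈ S, 1 < Nat.gcd q m := by
    intro m hm
    by_contra h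
    push_neg at h
    interval_cases hg : Nat.gcd q m
    · exact absurd (Nat.eq_zero_of_gcd_eq_zero_left hg) (by omega)
    · have hcp : Nat.Coprime q m := hg
      have : q ∣ ∏ x ∈ S.erase m, x := by
        have := (Finset.mul_prod_erase S id hm)
        simp only [id] at this
        refine (Nat.Coprime.dvd_of_dvd_mul_left hcp ?_)
        rw [this]; exact hSdvd
      have := hmin (S.erase m) (fun x hx => hSQ (Finset.mem_of_mem_erase hx)) this
      have := Finset.card_erase_of_mem hm
      have hd1 : 1 ≤ S.card := Finset.card_pos.mpr ⟨m, hm⟩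
      omega
  -- product of gcds divides q
  have hproddvd : (∏ m ∈ S, Nat.gcd q m) ∣ q := by
    apply aux_prod_dvd q S (fun m => Nat.gcd q m)
    · intro a ha b hb hab
      exact Nat.Coprime.coprime_dvd_left (Nat.gcd_dvd_right q a)
        (Nat.Coprime.coprime_dvd_right (Nat.gcd_dvd_right q b)
          (hcop a (hSQ ha) b (hSQ hb) hab))
    · intro a _; exact Nat.gcd_dvd_left q a
  -- real bound
  have hqpos : 0 < q := by omega
  have hle : ((∏ m ∈ S, Nat.gcd q m : ℕ) : ℝ) ≤ (q : ℝ) := by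
    exact_mod_cast Nat.le_of_dvd hqpos hproddvd
  push_cast at hle
  -- each gcd for m ≠ q₀ satisfies Y < gcd
  have hYlt : ∀ m ∈ S, m ≠ q₀ → Y ≤ (Nat.gcd q m : ℝ) := by
    intro m hm hmq
    obtain ⟨p, b, hp, hpY, hb, rfl⟩ := hq₀ m (hSQ hm) hmq
    have h1 : Nat.gcd q (p ^ b) ∣ p ^ b := Nat.gcd_dvd_right _ _
    have hpd : p ∣ Nat.gcd q (p ^ b) := by
      obtain ⟨k, hk, hkeq⟩ := (Nat.dvd_prime_pow hp).mp h1
      rcases Nat.eq_zero_or_pos k with rfl | hk0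
      · exfalso; have h2 := hgcd _ hm; rw [hkeq, pow_zero] at h2; omega
      · rw [hkeq]; exact dvd_pow_self p (by omega)
    have : (p : ℝ) ≤ (Nat.gcd q (p ^ b) : ℝ) := by
      exact_mod_cast Nat.le_of_dvd (by have := hgcd _ hm; omega) hpd
    linarith
  -- Y^(d-1) ≤ Y^(S.erase q₀).card ≤ ∏ over erase ≤ ∏ over S
  have hTcard : d - 1 ≤ (S.erase q₀).card := by
    by_cases h : q₀ ∈ S
    · have := Finset.card_erase_of_mem h
      omega
    · have : (S.erase q₀).card = S.card := by rw [Finset.erase_eq_of_notMem h]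
      omega
  have h1 : Y ^ (d - 1) ≤ Y ^ (S.erase q₀).card := pow_le_pow_right₀ hY hTcard
  have h2 : Y ^ (S.erase q₀).card ≤ ∏ m ∈ S.erase q₀, (Nat.gcd q m : ℝ) := by
    rw [← Finset.prod_const]
    apply Finset.prod_le_prod (fun _ _ => by linarith)
    intro m hm
    exact hYlt m (Finset.mem_of_mem_erase hm) (Finset.ne_of_mem_erase hm)
  have h3 : (∏ m ∈ S.erase q₀, (Nat.gcd q m : ℝ)) ≤ ∏ m ∈ S, (Nat.gcd q m : ℝ) := by
    have hdvd2 : (∏ m ∈ S.erase q₀, Nat.gcd q m) ∣ ∏ m ∈ S, Nat.gcd q m :=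
      Finset.prod_dvd_prod_of_subset _ _ _ (Finset.erase_subset _ _)
    have hpos2 : 0 < ∏ m ∈ S, Nat.gcd q m :=
      Finset.prod_pos (fun m hm => by have := hgcd m hm; omega)
    have := Nat.le_of_dvd hpos2 hdvd2
    push_cast
    exact_mod_cast this
  linarith
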